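/- Let f : [0,1] → ℝ be continuous and not identically zero. Then ∫₀¹ ∫₀¹ f(z) · (1/2)·e^{-|z-y|} · f(y) dy dz > 0, i.e., the kernel G(z,y) = (1/2)·e^{-|z-y|} is positive definite on [0,1]. -/

import Mathlib

open MeasureTheory intervalIntegral Set

lemma exp_kernel_key (g : ℝ → ℝ) (hg : Continuous g)
    (hne : ∃ z ∈ Set.Icc (0:ℝ) 1, g z ≠ 0) :
    0 < ∫ z in (0:ℝ)..1, ∫ y in (0:ℝ)..1,
          g z * ((1/2) * Real.exp (-|z - y|)) * g y := by
  set P : ℝ → ℝ := fun z => ∫ y in (0:ℝ)..z, Real.exp y * g y with hPdef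
  set Q : ℝ → ℝ := fun z => ∫ y in z..(1:ℝ), Real.exp (-y) * g y with hQdef
  have hc1 : Continuous fun y => Real.exp y * g y := (Real.continuous_exp).mul hg
  have hc2 : Continuous fun y => Real.exp (-y) * g y :=
    (Real.continuous_exp.comp continuous_neg).mul hg
  have hP : ∀ z : ℝ, HasDerivAt P (Real.exp z * g z) z := by
    intro z
    exact intervalIntegral.integral_hasDerivAt_right (hc1.intervalIntegrable _ _)
      (hc1.stronglyMeasurableAtFilter _ _) hc1.continuousAt
  have hQ : ∀ z : ℝ, HasDerivAt Q (-(Real.exp (-z) * g z)) z := by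
    intro z
    exact intervalIntegral.integral_hasDerivAt_left (hc2.intervalIntegrable _ _)
      (hc2.stronglyMeasurableAtFilter _ _) hc2.continuousAt
  have hPc : Continuous P := by
    refine continuous_iff_continuousAt.2 fun z => (hP z).continuousAt
  have hQc : Continuous Q := by
    refine continuous_iff_continuousAt.2 fun z => (hQ z).continuousAt
  -- inner integral evaluation
  have inner_eq : ∀ z ∈ Set.uIcc (0:ℝ) 1,
      (∫ y in (0:ℝ)..1, g z * ((1/2) * Real.exp (-|z - y|)) * g y)
        = (1/2) * (g z * Real.exp (-z) * P z + g z * Real.exp z * Q z) := by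
    intro z hz
    rw [Set.uIcc_of_le (by norm_num : (0:ℝ) ≤ 1)] at hz
    obtain ⟨hz0, hz1⟩ := hz
    have hcy : Continuous fun y => g z * ((1/2) * Real.exp (-|z - y|)) * g y := by
      fun_prop
    have hsplit : (∫ y in (0:ℝ)..1, g z * ((1/2) * Real.exp (-|z - y|)) * g y)
        = (∫ y in (0:ℝ)..z, g z * ((1/2) * Real.exp (-|z - y|)) * g y)
          + ∫ y in z..(1:ℝ), g z * ((1/2) * Real.exp (-|z - y|)) * g y := by
      rw [intervalIntegral.integral_add_adjacent_intervals (hcy.intervalIntegrable _ _)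
        (hcy.intervalIntegrable _ _)]
    rw [hsplit]
    have h1 : (∫ y in (0:ℝ)..z, g z * ((1/2) * Real.exp (-|z - y|)) * g y)
        = (g z * (1/2) * Real.exp (-z)) * P z := by
      rw [hPdef, ← intervalIntegral.integral_const_mul]
      apply intervalIntegral.integral_congr
      intro y hy
      rw [Set.uIcc_of_le hz0] at hy
      show g z * (1 / 2 * Real.exp (-|z - y|)) * g y
        = g z * (1 / 2) * Real.exp (-z) * (Real.exp y * g y)
      have : |z - y| = z - y := abs_of_nonneg (by linarith [hy.2])
      rw [this, show -(z - y) = y + (-z) by ring, Real.exp_add]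
      ring
    have h2 : (∫ y in z..(1:ℝ), g z * ((1/2) * Real.exp (-|z - y|)) * g y)
        = (g z * (1/2) * Real.exp z) * Q z := by
      rw [hQdef, ← intervalIntegral.integral_const_mul]
      apply intervalIntegral.integral_congr
      intro y hy
      rw [Set.uIcc_of_le hz1] at hy
      show g z * (1 / 2 * Real.exp (-|z - y|)) * g y
        = g z * (1 / 2) * Real.exp z * (Real.exp (-y) * g y)
      have : |z - y| = y - z := by
        rw [abs_sub_comm]; exact abs_of_nonneg (by linarith [hy.1])
      rw [this, show -(y - z) = (-y) + z by ring, Real.exp_add]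
      ring
    rw [h1, h2]; ring
  have outer_eq : (∫ z in (0:ℝ)..1, ∫ y in (0:ℝ)..1,
        g z * ((1/2) * Real.exp (-|z - y|)) * g y)
      = ∫ z in (0:ℝ)..1,
          ((1/2) * (g z * Real.exp (-z) * P z + g z * Real.exp z * Q z)) :=
    intervalIntegral.integral_congr inner_eq
  -- FTC: the integrand equals T' z + exp(2z) * Q z ^ 2
  set T : ℝ → ℝ := fun z => -(1/2) * (P z * Q z) - (1/2) * Real.exp (2*z) * (Q z)^2
    with hTdef
  have hT : ∀ z : ℝ, HasDerivAt T
      ((1/2) * (g z * Real.exp (-z) * P z + g z * Real.exp z * Q z)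
        - Real.exp (2*z) * (Q z)^2) z := by
    intro z
    have hPQ : HasDerivAt (fun z => P z * Q z)
        (Real.exp z * g z * Q z + P z * -(Real.exp (-z) * g z)) z := (hP z).mul (hQ z)
    have hexp : HasDerivAt (fun z : ℝ => Real.exp (2*z)) (Real.exp (2*z) * 2) z := by
      exact ((Real.hasDerivAt_exp (2*z)).comp z
        ((hasDerivAt_id z).const_mul (2:ℝ))).congr_deriv (by simp)
    have hQ2 : HasDerivAt (fun z => (Q z)^2) (2 * Q z * -(Real.exp (-z) * g z)) z := by
      exact ((hQ z).pow 2).congr_deriv (by norm_num)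
    have := ((hPQ.const_mul (-(1/2):ℝ)).sub
      (((hexp.mul hQ2).const_mul ((1/2):ℝ))))
    refine (this.congr_of_eventuallyEq (Filter.Eventually.of_forall fun x => by
      simp only [hTdef, Pi.sub_apply, Pi.mul_apply]; ring)).congr_deriv ?_
    have h2 : Real.exp (2*z) = Real.exp z * Real.exp z := by
      rw [← Real.exp_add]; ring_nf
    have hinv : Real.exp (-z) = (Real.exp z)⁻¹ := Real.exp_neg z
    have hne' : Real.exp z ≠ 0 := (Real.exp_pos z).ne'
    rw [h2, hinv]
    field_simp
    ring
  have hTint : IntervalIntegrable (fun z =>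
      (1/2) * (g z * Real.exp (-z) * P z + g z * Real.exp z * Q z)
        - Real.exp (2*z) * (Q z)^2) MeasureTheory.volume 0 1 := by
    apply Continuous.intervalIntegrable; fun_prop
  have hFTC : (∫ z in (0:ℝ)..1,
      ((1/2) * (g z * Real.exp (-z) * P z + g z * Real.exp z * Q z)
        - Real.exp (2*z) * (Q z)^2)) = T 1 - T 0 :=
    intervalIntegral.integral_eq_sub_of_hasDerivAt (fun z _ => hT z) hTint
  have hsq_int : IntervalIntegrable (fun z => Real.exp (2*z) * (Q z)^2)
      MeasureTheory.volume 0 1 := by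
    apply Continuous.intervalIntegrable; fun_prop
  have hmain : (∫ z in (0:ℝ)..1,
        ((1/2) * (g z * Real.exp (-z) * P z + g z * Real.exp z * Q z)))
      = (T 1 - T 0) + ∫ z in (0:ℝ)..1, Real.exp (2*z) * (Q z)^2 := by
    rw [← hFTC, ← intervalIntegral.integral_add hTint hsq_int]
    apply intervalIntegral.integral_congr
    intro z _; ring
  have hQ1 : Q 1 = 0 := by simp [hQdef]
  have hP0 : P 0 = 0 := by simp [hPdef]
  have hT1 : T 1 = 0 := by simp [hTdef, hQ1]
  have hT0 : T 0 = -(1/2) * (Q 0)^2 := by simp [hTdef, hP0]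
  rw [outer_eq, hmain, hT1, hT0]
  -- now positivity
  have hBnn : 0 ≤ ∫ z in (0:ℝ)..1, Real.exp (2*z) * (Q z)^2 := by
    apply intervalIntegral.integral_nonneg (by norm_num)
    intro z _; positivity
  by_contra hcon
  push_neg at hcon
  have hQ0 : Q 0 = 0 := by nlinarith [sq_nonneg (Q 0)]
  have hB0 : (∫ z in (0:ℝ)..1, Real.exp (2*z) * (Q z)^2) = 0 := by
    nlinarith [sq_nonneg (Q 0)]
  -- continuous nonneg with zero integral is ae zero, hence zero on Ioc
  have hae : (fun z => Real.exp (2*z) * (Q z)^2)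
      =ᵐ[MeasureTheory.volume.restrict (Set.Ioc (0:ℝ) 1)] 0 := by
    rw [← intervalIntegral.integral_eq_zero_iff_of_le_of_nonneg_ae (by norm_num)
      (Filter.Eventually.of_forall fun z => by positivity)
      (hsq_int)]
    exact hB0
  have hQzero : ∀ z ∈ Set.Ioc (0:ℝ) 1, Q z = 0 := by
    intro z hz
    have := MeasureTheory.Measure.eqOn_Ioc_of_ae_eq (μ := MeasureTheory.volume) hae
      (Continuous.continuousOn (by fun_prop)) continuousOn_const hz
    simp only [Pi.zero_apply] at this
    have h2 : (Q z)^2 = 0 := by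
      rcases mul_eq_zero.1 this with h | h
      · exact absurd h (Real.exp_pos _).ne'
      · exact h
    exact pow_eq_zero_iff (by norm_num) |>.1 h2
  have hQIcc : ∀ z ∈ Set.Icc (0:ℝ) 1, Q z = 0 := by
    intro z hz
    rcases eq_or_lt_of_le hz.1 with h | h
    · rw [← h]; exact hQ0
    · exact hQzero z ⟨h, hz.2⟩
  -- Q=0 on [0,1] implies g=0 on (0,1), hence on [0,1] by continuity
  have hg0 : ∀ z ∈ Set.Ioo (0:ℝ) 1, g z = 0 := by
    intro z hz
    have hev : Q =ᶠ[nhds z] (fun _ => 0) := by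
      filter_upwards [Ioo_mem_nhds hz.1 hz.2] with w hw
      exact hQIcc w ⟨le_of_lt hw.1, le_of_lt hw.2⟩
    have hQd0 : HasDerivAt Q 0 z := by
      exact (hasDerivAt_const z (0:ℝ)).congr_of_eventuallyEq hev
    have := hQd0.unique (hQ z)
    have he : Real.exp (-z) ≠ 0 := (Real.exp_pos _).ne'
    have : Real.exp (-z) * g z = 0 := by linarith [this]
    exact (mul_eq_zero.1 this).resolve_left he
  have hgIcc : Set.EqOn g (fun _ => 0) (Set.Icc (0:ℝ) 1) := by
    have h1 : Set.EqOn g (fun _ => 0) (Set.Ioo (0:ℝ) 1) := hg0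
    have := h1.closure hg continuous_const
    rwa [closure_Ioo (by norm_num : (0:ℝ) ≠ 1)] at this
  obtain ⟨z₀, hz₀, hz₀ne⟩ := hne
  exact hz₀ne (hgIcc hz₀)

/-- The exponential kernel `G(z,y) = (1/2)·e^{-|z-y|}` is positive definite on `[0,1]`:
for every continuous `f : [0,1] → ℝ` not identically zero,
`∫₀¹∫₀¹ f(z) G(z,y) f(y) dy dz > 0`. -/
theorem exp_kernel_positive_definite
    (f : ℝ → ℝ) (hf : ContinuousOn f (Set.Icc 0 1))
    (hne : ∃ z ∈ Set.Icc (0:ℝ) 1, f z ≠ 0) :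
    0 < ∫ z in (0:ℝ)..1, ∫ y in (0:ℝ)..1,
          f z * ((1/2) * Real.exp (-|z - y|)) * f y := by
  set g : ℝ → ℝ := Set.IccExtend (zero_le_one) ((Set.Icc (0:ℝ) 1).restrict f) with hgdef
  have hgf : ∀ x ∈ Set.Icc (0:ℝ) 1, g x = f x := by
    intro x hx
    rw [hgdef, Set.IccExtend_of_mem _ _ hx]
    rfl
  have hgc : Continuous g := Continuous.Icc_extend' hf.restrict
  have hgne : ∃ z ∈ Set.Icc (0:ℝ) 1, g z ≠ 0 := by
    obtain ⟨z, hz, hzne⟩ := hne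
    exact ⟨z, hz, by rw [hgf z hz]; exact hzne⟩
  have heq : (∫ z in (0:ℝ)..1, ∫ y in (0:ℝ)..1,
        f z * ((1/2) * Real.exp (-|z - y|)) * f y)
      = ∫ z in (0:ℝ)..1, ∫ y in (0:ℝ)..1,
        g z * ((1/2) * Real.exp (-|z - y|)) * g y := by
    apply intervalIntegral.integral_congr
    intro z hz
    rw [Set.uIcc_of_le (by norm_num : (0:ℝ) ≤ 1)] at hz
    apply intervalIntegral.integral_congr
    intro y hy
    rw [Set.uIcc_of_le (by norm_num : (0:ℝ) ≤ 1)] at hy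
    show f z * ((1/2) * Real.exp (-|z - y|)) * f y
      = g z * ((1/2) * Real.exp (-|z - y|)) * g y
    rw [hgf z hz, hgf y hy]
  rw [heq]
  exact exp_kernel_key g hgc hgne
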